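/- Let M be a matroid of rank k on a finite ground set E. If M has no half-coloop, then M has the disjoint basis property: for every basis B of M there exists a basis C of M with B ∩ C = ∅. -/

import Mathlib

/-- An element `e` of the ground set of a matroid `M` of rank `k` is a *half-coloop* if
there exist (not necessarily distinct) flats `F₁, F₂` of `M`, each of rank `k - 1`,
with `F₁ ∪ F₂ = M.E \ {e}`. -/
def Matroid.IsHalfColoop {α : Type*} (M : Matroid α) (k : ℕ) (e : α) : Prop :=
  ∃ F₁ F₂ : Set α, M.IsFlat F₁ ∧ M.IsFlat F₂ ∧
    (∃ I : Set α, M.IsBasis I F₁ ∧ I.ncard = k - 1) ∧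
    (∃ I : Set α, M.IsBasis I F₂ ∧ I.ncard = k - 1) ∧
    F₁ ∪ F₂ = M.E \ {e}

lemma Matroid.flat_closure' {α : Type*} (M : Matroid α) (X : Set α) :
    M.IsFlat (M.closure X) := by
  rw [Matroid.closure_def, Set.sInter_eq_iInter]
  haveI : Nonempty ↑{F | M.IsFlat F ∧ X ∩ M.E ⊆ F} :=
    ⟨⟨M.E, M.ground_isFlat, Set.inter_subset_right⟩⟩
  exact Matroid.IsFlat.iInter fun F => F.2.1

/-- A matroid of rank `k` on a finite ground set with no half-coloop
has the disjoint basis property: every basis is disjoint from some other basis. -/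
theorem disjoint_basis_of_no_halfColoop {α : Type*} (M : Matroid α) (k : ℕ)
    (hfin : M.E.Finite) (hrk : ∀ B : Set α, M.IsBase B → B.ncard = k)
    (hnohc : ¬ ∃ e ∈ M.E, M.IsHalfColoop k e) :
    ∀ B : Set α, M.IsBase B → ∃ C : Set α, M.IsBase C ∧ B ∩ C = ∅ := by
  intro B hB
  obtain ⟨J, hJ⟩ := M.exists_isBasis (M.E \ B) Set.diff_subset
  obtain ⟨B', hB', hJB', hB'sub⟩ := hJ.indep.exists_isBase_subset_union_isBase hB
  by_cases hint : B ∩ B' = ∅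
  · exact ⟨B', hB', hint⟩
  obtain ⟨e, heB, heB'⟩ := Set.nonempty_iff_ne_empty.2 hint
  exfalso
  apply hnohc
  have heJ : e ∉ J := fun h => (hJ.subset h).2 heB
  have hJsub : J ⊆ B' \ {e} := Set.subset_diff_singleton hJB' heJ
  have hBfin : B.Finite := hfin.subset hB.subset_ground
  have hB'fin : B'.Finite := hfin.subset hB'.subset_ground
  refine ⟨e, hB.subset_ground heB, M.closure (B' \ {e}), M.closure (B \ {e}),
    M.flat_closure' _, M.flat_closure' _,
    ⟨B' \ {e}, (hB'.indep.subset Set.diff_subset).isBasis_closure, ?_⟩,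
    ⟨B \ {e}, (hB.indep.subset Set.diff_subset).isBasis_closure, ?_⟩, ?_⟩
  · rw [Set.ncard_diff_singleton_of_mem heB', hrk B' hB']
  · rw [Set.ncard_diff_singleton_of_mem heB, hrk B hB]
  · apply Set.Subset.antisymm
    · rintro x (hx | hx)
      · exact ⟨M.closure_subset_ground _ hx,
          fun h => hB'.indep.notMem_closure_diff_of_mem heB' (h ▸ hx)⟩
      · exact ⟨M.closure_subset_ground _ hx,
          fun h => hB.indep.notMem_closure_diff_of_mem heB (h ▸ hx)⟩
    · rintro x ⟨hxE, hxe⟩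
      by_cases hxB : x ∈ B
      · exact Or.inr (M.subset_closure (B \ {e})
          (Set.diff_subset.trans hB.subset_ground) ⟨hxB, hxe⟩)
      · exact Or.inl ((M.closure_subset_closure hJsub) (hJ.subset_closure ⟨hxE, hxB⟩))
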